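/- In a regular uncountable cardinal λ, for any partition of λ into fibers of a map to a set of size < λ, there exists a closed unbounded set C ⊆ λ such that for every fiber P of cardinality λ, both P ∩ C and P \ C have cardinality λ. -/

import Mathlib

open Set

variable {α : Type u}

/-- `A` is closed in the well-ordered type `α`: it contains the least upper bound
of each of its nonempty subsets that has one. -/
def IsClosedSet [LinearOrder α] (A : Set α) : Prop :=
  ∀ B ⊆ A, B.Nonempty → ∀ x, IsLUB B x → x ∈ A

/-- `A` is unbounded in `α`. -/
def IsUnboundedSet [LinearOrder α] (A : Set α) : Prop :=
  ∀ a : α, ∃ b ∈ A, a < b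

/-- `A` is a club (closed unbounded) subset of `α`. -/
def IsClubSet [LinearOrder α] (A : Set α) : Prop :=
  IsClosedSet A ∧ IsUnboundedSet A

section Stmt17Aux

open Cardinal

universe v

variable {β : Type v} {Y : Type v} [LinearOrder β] [IsWellOrder β (· < ·)]

private lemma stmt17_small_Iic (hreg : (#β).IsRegular)
    (hseg : ∀ x : β, #(Set.Iio x) < #β) (x : β) : #(Set.Iic x) < #β := by
  have hsub : (Set.Iic x : Set β) ⊆ insert x (Set.Iio x) := by
    intro b hb
    rcases lt_or_eq_of_le (hb : b ≤ x) with h | h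
    · exact Or.inr h
    · exact Or.inl h
  calc #(Set.Iic x) ≤ #(insert x (Set.Iio x) : Set β) := mk_le_mk_of_subset hsub
    _ ≤ #(Set.Iio x) + 1 := mk_insert_le
    _ < #β := add_lt_of_lt hreg.aleph0_le (hseg x)
        (lt_of_lt_of_le one_lt_aleph0 hreg.aleph0_le)

private lemma stmt17_exists_bnd (hreg : (#β).IsRegular)
    (hseg : ∀ x : β, #(Set.Iio x) < #β) (B : Set β) (hB : #B < #β) :
    ∃ u : β, ∀ b ∈ B, b < u := by
  by_contra h
  push_neg at h
  have cover : (Set.univ : Set β) ⊆ ⋃ b : B, Set.Iic (b : β) := by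
    intro u _
    obtain ⟨b, hbB, hb⟩ := h u
    exact Set.mem_iUnion.2 ⟨⟨b, hbB⟩, hb⟩
  have hle : #β ≤ Cardinal.sum fun b : B => #(Set.Iic (b : β)) := by
    calc #β = #(Set.univ : Set β) := mk_univ.symm
      _ ≤ #(⋃ b : B, Set.Iic (b : β)) := mk_le_mk_of_subset cover
      _ ≤ _ := mk_iUnion_le_sum_mk
  exact absurd hle (not_le.2 (sum_lt_of_isRegular hreg hB
    fun b => stmt17_small_Iic hreg hseg b))

private noncomputable def stmt17_bnd (hreg : (#β).IsRegular)
    (hseg : ∀ x : β, #(Set.Iio x) < #β) (B : Set β) (hB : #B < #β) : β :=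
  (stmt17_exists_bnd hreg hseg B hB).choose

private lemma stmt17_lt_bnd (hreg : (#β).IsRegular)
    (hseg : ∀ x : β, #(Set.Iio x) < #β) (B : Set β) (hB : #B < #β) :
    ∀ b ∈ B, b < stmt17_bnd hreg hseg B hB :=
  (stmt17_exists_bnd hreg hseg B hB).choose_spec

open Classical in
private noncomputable def stmt17_nxt (f : β → Y) (y : Y) (a : β) : β :=
  if h : ∃ b, b ∈ f ⁻¹' {y} ∧ a < b then h.choose else a

private lemma stmt17_nxt_spec (f : β → Y) (y : Y) (a : β)
    (hy : IsUnboundedSet (f ⁻¹' {y})) :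
    stmt17_nxt f y a ∈ f ⁻¹' {y} ∧ a < stmt17_nxt f y a := by
  classical
  have h : ∃ b, b ∈ f ⁻¹' {y} ∧ a < b := hy a
  rw [stmt17_nxt, dif_pos h]
  exact h.choose_spec

private lemma stmt17_small_insert_range (hreg : (#β).IsRegular)
    (hY : #Y < #β) (a : β) (g : Y → β) :
    #(insert a (Set.range g) : Set β) < #β :=
  calc #(insert a (Set.range g) : Set β) ≤ #(Set.range g) + 1 := mk_insert_le
    _ ≤ #Y + 1 := add_le_add_left mk_range_le 1
    _ < #β := add_lt_of_lt hreg.aleph0_le hY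
        (lt_of_lt_of_le one_lt_aleph0 hreg.aleph0_le)

private lemma stmt17_small_insert_range' (hreg : (#β).IsRegular)
    (hseg : ∀ x : β, #(Set.Iio x) < #β) (x : β) (g : Set.Iio x → β) :
    #(insert x (Set.range g) : Set β) < #β :=
  calc #(insert x (Set.range g) : Set β) ≤ #(Set.range g) + 1 := mk_insert_le
    _ ≤ #(Set.Iio x) + 1 := add_le_add_left mk_range_le 1
    _ < #β := add_lt_of_lt hreg.aleph0_le (hseg x)
        (lt_of_lt_of_le one_lt_aleph0 hreg.aleph0_le)

variable (hreg : (#β).IsRegular) (hseg : ∀ x : β, #(Set.Iio x) < #β)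
  (hY : #Y < #β) (f : β → Y)

/-- A bound above `a` and above the chosen next fiber elements after `a`. -/
private noncomputable def stmt17_mbd (a : β) : β :=
  stmt17_bnd hreg hseg (insert a (Set.range fun y => stmt17_nxt f y a))
    (stmt17_small_insert_range hreg hY a _)

private lemma stmt17_lt_mbd (a : β) : a < stmt17_mbd hreg hseg hY f a :=
  stmt17_lt_bnd hreg hseg _ _ a (Set.mem_insert _ _)

private lemma stmt17_nxt_lt_mbd (a : β) (y : Y) :
    stmt17_nxt f y a < stmt17_mbd hreg hseg hY f a :=
  stmt17_lt_bnd hreg hseg _ _ _ (Set.mem_insert_of_mem _ ⟨y, rfl⟩)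

/-- A bound above `mbd a` and the chosen fiber elements after `mbd a`. -/
private noncomputable def stmt17_gbd (a : β) : β :=
  stmt17_bnd hreg hseg
    (insert (stmt17_mbd hreg hseg hY f a)
      (Set.range fun y => stmt17_nxt f y (stmt17_mbd hreg hseg hY f a)))
    (stmt17_small_insert_range hreg hY _ _)

private lemma stmt17_mbd_lt_gbd (a : β) :
    stmt17_mbd hreg hseg hY f a < stmt17_gbd hreg hseg hY f a :=
  stmt17_lt_bnd hreg hseg _ _ _ (Set.mem_insert _ _)

private lemma stmt17_nxt_mbd_lt_gbd (a : β) (y : Y) :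
    stmt17_nxt f y (stmt17_mbd hreg hseg hY f a) < stmt17_gbd hreg hseg hY f a :=
  stmt17_lt_bnd hreg hseg _ _ _ (Set.mem_insert_of_mem _ ⟨y, rfl⟩)

private lemma stmt17_lt_gbd (a : β) : a < stmt17_gbd hreg hseg hY f a :=
  lt_trans (stmt17_lt_mbd hreg hseg hY f a) (stmt17_mbd_lt_gbd hreg hseg hY f a)

/-- The fundamental increasing sequence, indexed by `β` itself. -/
private noncomputable def stmt17_cseq : β → β :=
  IsWellFounded.fix (· < ·) fun x ih =>
    stmt17_bnd hreg hseg
      (insert x (Set.range fun z : Set.Iio x => stmt17_gbd hreg hseg hY f (ih z z.2)))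
      (stmt17_small_insert_range' hreg hseg x _)

private lemma stmt17_cseq_eq (x : β) :
    stmt17_cseq hreg hseg hY f x =
      stmt17_bnd hreg hseg
        (insert x (Set.range fun z : Set.Iio x =>
          stmt17_gbd hreg hseg hY f (stmt17_cseq hreg hseg hY f z)))
        (stmt17_small_insert_range' hreg hseg x _) :=
  IsWellFounded.fix_eq _ _ x

private lemma stmt17_lt_cseq (x : β) : x < stmt17_cseq hreg hseg hY f x := by
  rw [stmt17_cseq_eq]
  exact stmt17_lt_bnd hreg hseg _ _ x (Set.mem_insert _ _)

private lemma stmt17_gbd_lt_cseq {z x : β} (h : z < x) :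
    stmt17_gbd hreg hseg hY f (stmt17_cseq hreg hseg hY f z) <
      stmt17_cseq hreg hseg hY f x := by
  conv_rhs => rw [stmt17_cseq_eq]
  exact stmt17_lt_bnd hreg hseg _ _ _ (Set.mem_insert_of_mem _ ⟨⟨z, h⟩, rfl⟩)

private lemma stmt17_cseq_mono {z x : β} (h : z < x) :
    stmt17_cseq hreg hseg hY f z < stmt17_cseq hreg hseg hY f x :=
  lt_trans (stmt17_lt_gbd hreg hseg hY f _) (stmt17_gbd_lt_cseq hreg hseg hY f h)

/-- Base set: the sequence together with chosen fiber elements above each `mbd (cseq z)`. -/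
private def stmt17_S : Set β :=
  Set.range (stmt17_cseq hreg hseg hY f) ∪
    {b | ∃ z y, b = stmt17_nxt f y (stmt17_mbd hreg hseg hY f (stmt17_cseq hreg hseg hY f z)) ∧
      stmt17_mbd hreg hseg hY f (stmt17_cseq hreg hseg hY f z) < b}

/-- The club: the base set plus its limit points. -/
private def stmt17_C : Set β :=
  stmt17_S hreg hseg hY f ∪
    {x | (stmt17_S hreg hseg hY f ∩ Set.Iio x).Nonempty ∧
      IsLUB (stmt17_S hreg hseg hY f ∩ Set.Iio x) x}

/-- Every element of `S` avoids each gap `(cseq w, mbd (cseq w)]`. -/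
private lemma stmt17_S_gap (w : β) {s : β} (hs : s ∈ stmt17_S hreg hseg hY f) :
    s ≤ stmt17_cseq hreg hseg hY f w ∨
      stmt17_mbd hreg hseg hY f (stmt17_cseq hreg hseg hY f w) < s := by
  have hs' : (∃ z, stmt17_cseq hreg hseg hY f z = s) ∨
      (∃ z y, s = stmt17_nxt f y
          (stmt17_mbd hreg hseg hY f (stmt17_cseq hreg hseg hY f z)) ∧
        stmt17_mbd hreg hseg hY f (stmt17_cseq hreg hseg hY f z) < s) := hs
  rcases hs' with ⟨z, rfl⟩ | ⟨z, y, rfl, hgt⟩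
  · rcases lt_trichotomy z w with h | h | h
    · exact Or.inl (le_of_lt (stmt17_cseq_mono hreg hseg hY f h))
    · exact Or.inl (le_of_eq (by rw [h]))
    · refine Or.inr ?_
      calc stmt17_mbd hreg hseg hY f (stmt17_cseq hreg hseg hY f w)
          < stmt17_gbd hreg hseg hY f (stmt17_cseq hreg hseg hY f w) :=
            stmt17_mbd_lt_gbd hreg hseg hY f _
        _ < stmt17_cseq hreg hseg hY f z := stmt17_gbd_lt_cseq hreg hseg hY f h
  · rcases lt_trichotomy z w with h | h | h
    · refine Or.inl (le_of_lt ?_)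
      calc stmt17_nxt f y (stmt17_mbd hreg hseg hY f (stmt17_cseq hreg hseg hY f z))
          < stmt17_gbd hreg hseg hY f (stmt17_cseq hreg hseg hY f z) :=
            stmt17_nxt_mbd_lt_gbd hreg hseg hY f _ y
        _ < stmt17_cseq hreg hseg hY f w := stmt17_gbd_lt_cseq hreg hseg hY f h
    · exact Or.inr (by rw [← h]; exact hgt)
    · refine Or.inr ?_
      calc stmt17_mbd hreg hseg hY f (stmt17_cseq hreg hseg hY f w)
          < stmt17_gbd hreg hseg hY f (stmt17_cseq hreg hseg hY f w) :=
            stmt17_mbd_lt_gbd hreg hseg hY f _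
        _ < stmt17_cseq hreg hseg hY f z := stmt17_gbd_lt_cseq hreg hseg hY f h
        _ < stmt17_mbd hreg hseg hY f (stmt17_cseq hreg hseg hY f z) :=
            stmt17_lt_mbd hreg hseg hY f _
        _ < _ := hgt

/-- No element of `C` lies in a gap `(cseq w, mbd (cseq w)]`. -/
private lemma stmt17_C_gap (w : β) {x : β} (hx : x ∈ stmt17_C hreg hseg hY f)
    (h1 : stmt17_cseq hreg hseg hY f w < x)
    (h2 : x ≤ stmt17_mbd hreg hseg hY f (stmt17_cseq hreg hseg hY f w)) : False := by
  have hx' : x ∈ stmt17_S hreg hseg hY f ∨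
      ((stmt17_S hreg hseg hY f ∩ Set.Iio x).Nonempty ∧
        IsLUB (stmt17_S hreg hseg hY f ∩ Set.Iio x) x) := hx
  rcases hx' with hxS | ⟨hne, hlub⟩
  · rcases stmt17_S_gap hreg hseg hY f w hxS with h | h
    · exact absurd h1 (not_lt.2 h)
    · exact absurd h2 (not_le.2 h)
  · have hub : stmt17_cseq hreg hseg hY f w ∈
        upperBounds (stmt17_S hreg hseg hY f ∩ Set.Iio x) := by
      rintro s ⟨hsS, hsx⟩
      rcases stmt17_S_gap hreg hseg hY f w hsS with h | h
      · exact h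
      · exact absurd (lt_of_lt_of_le hsx h2) (not_lt.2 (le_of_lt h))
    exact absurd (hlub.2 hub) (not_le.2 h1)

end Stmt17Aux

/-- For `λ = #α` regular uncountable and `f : α → Y` with `#Y < λ`, there is a
club `C ⊆ α` such that every fiber of `f` of cardinality `λ` meets both `C` and
its complement in sets of cardinality `λ`. -/
theorem stmt_17 {α Y : Type u} [LinearOrder α] [IsWellOrder α (· < ·)]
    (hreg : (Cardinal.mk α).IsRegular) (hunc : Cardinal.aleph0 < Cardinal.mk α)
    (hseg : ∀ x : α, Cardinal.mk (Set.Iio x) < Cardinal.mk α)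
    (hY : Cardinal.mk Y < Cardinal.mk α) (f : α → Y) :
    ∃ C : Set α, IsClubSet C ∧ ∀ y : Y,
      Cardinal.mk (f ⁻¹' {y} : Set α) = Cardinal.mk α →
        Cardinal.mk ((f ⁻¹' {y}) ∩ C : Set α) = Cardinal.mk α ∧
        Cardinal.mk ((f ⁻¹' {y}) \ C : Set α) = Cardinal.mk α := by
  classical
  set c := stmt17_cseq hreg hseg hY f with hc
  set m := stmt17_mbd hreg hseg hY f with hm
  set S := stmt17_S hreg hseg hY f with hSdef
  set C := stmt17_C hreg hseg hY f with hCdef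
  have hSC : S ⊆ C := fun s hs => Or.inl hs
  have hCcases : ∀ {b : α}, b ∈ C →
      b ∈ S ∨ ((S ∩ Set.Iio b).Nonempty ∧ IsLUB (S ∩ Set.Iio b) b) := fun h => h
  have unb_of_mk : ∀ A : Set α, Cardinal.mk A = Cardinal.mk α → IsUnboundedSet A := by
    intro A hA a
    by_contra h
    push_neg at h
    have hsub : A ⊆ Set.Iic a := fun b hb => h b hb
    have hlt := (Cardinal.mk_le_mk_of_subset hsub).trans_lt (stmt17_small_Iic hreg hseg a)
    rw [hA] at hlt
    exact lt_irrefl _ hlt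
  refine ⟨C, ⟨?_, ?_⟩, ?_⟩
  · -- closed
    intro B hB hBne x hx
    by_cases hxB : x ∈ B
    · exact hB hxB
    · have hblt : ∀ b ∈ B, b < x := fun b hb =>
        lt_of_le_of_ne (hx.1 hb) (fun h => hxB (h ▸ hb))
      refine Or.inr ⟨?_, ?_, ?_⟩
      · obtain ⟨b, hb⟩ := hBne
        rcases hCcases (hB hb) with hbS | ⟨⟨s, hs⟩, _⟩
        · exact ⟨b, hbS, hblt b hb⟩
        · exact ⟨s, hs.1, lt_trans hs.2 (hblt b hb)⟩
      · rintro s ⟨_, hsx⟩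
        exact le_of_lt hsx
      · intro u hu
        have hub : u ∈ upperBounds B := by
          intro b hb
          rcases hCcases (hB hb) with hbS | ⟨_, hlub⟩
          · exact hu ⟨hbS, hblt b hb⟩
          · exact hlub.2 fun s hs => hu ⟨hs.1, lt_trans hs.2 (hblt b hb)⟩
        exact hx.2 hub
  · -- unbounded
    intro a
    exact ⟨c a, hSC (Or.inl ⟨a, rfl⟩), stmt17_lt_cseq hreg hseg hY f a⟩
  · -- fibers
    intro y hy
    have hyu : IsUnboundedSet (f ⁻¹' {y}) := unb_of_mk _ hy
    have nxt_spec : ∀ a : α, stmt17_nxt f y a ∈ f ⁻¹' {y} ∧ a < stmt17_nxt f y a :=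
      fun a => stmt17_nxt_spec f y a hyu
    constructor
    · -- P ∩ C has size λ
      have hmem : ∀ x : α, stmt17_nxt f y (m (c x)) ∈ (f ⁻¹' {y}) ∩ C := by
        intro x
        exact ⟨(nxt_spec _).1, hSC (Or.inr ⟨x, y, rfl, (nxt_spec _).2⟩)⟩
      have hmono : StrictMono fun x : α => stmt17_nxt f y (m (c x)) := by
        intro x x' hxx'
        calc stmt17_nxt f y (m (c x))
            < stmt17_gbd hreg hseg hY f (c x) := stmt17_nxt_mbd_lt_gbd hreg hseg hY f _ y
          _ < c x' := stmt17_gbd_lt_cseq hreg hseg hY f hxx'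
          _ < m (c x') := stmt17_lt_mbd hreg hseg hY f _
          _ < stmt17_nxt f y (m (c x')) := (nxt_spec _).2
      have hinj : Function.Injective
          (fun x : α => (⟨stmt17_nxt f y (m (c x)), hmem x⟩ : ((f ⁻¹' {y}) ∩ C : Set α))) :=
        fun a b hab => hmono.injective (congrArg Subtype.val hab)
      exact le_antisymm (Cardinal.mk_set_le _) (Cardinal.mk_le_of_injective hinj)
    · -- P \ C has size λ
      have hmem : ∀ x : α, stmt17_nxt f y (c x) ∈ (f ⁻¹' {y}) \ C := by
        intro x
        refine ⟨(nxt_spec (c x)).1, fun hmemC => ?_⟩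
        exact stmt17_C_gap hreg hseg hY f x hmemC (nxt_spec (c x)).2
          (le_of_lt (stmt17_nxt_lt_mbd hreg hseg hY f (c x) y))
      have hmono : StrictMono fun x : α => stmt17_nxt f y (c x) := by
        intro x x' hxx'
        calc stmt17_nxt f y (c x)
            < m (c x) := stmt17_nxt_lt_mbd hreg hseg hY f _ y
          _ < stmt17_gbd hreg hseg hY f (c x) := stmt17_mbd_lt_gbd hreg hseg hY f _
          _ < c x' := stmt17_gbd_lt_cseq hreg hseg hY f hxx'
          _ < stmt17_nxt f y (c x') := (nxt_spec _).2
      have hinj : Function.Injective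
          (fun x : α => (⟨stmt17_nxt f y (c x), hmem x⟩ : ((f ⁻¹' {y}) \ C : Set α))) :=
        fun a b hab => hmono.injective (congrArg Subtype.val hab)
      exact le_antisymm (Cardinal.mk_set_le _) (Cardinal.mk_le_of_injective hinj)
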